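/- Let Γ be an additive subgroup of ℂ^k, H a Hermitian form on ℂ^k with Im H(γ,γ') ∈ ℤ for all γ,γ' ∈ Γ, and α : Γ → ℂ a semicharacter for H, i.e. |α(γ)| = 1 and α(γ₁+γ₂) = α(γ₁)·α(γ₂)·(−1)^{Im H(γ₁,γ₂)}. Let φ̄ : ℂ^k → ℂ^k be ℂ-linear with φ̄(Γ) ⊆ Γ and τ ∈ ℂ^k, and define H_φ(w,w') := H(φ̄w, φ̄w') and α_φ(γ) := α(φ̄γ)·exp(2πi·Im H(φ̄γ, τ)). Then for every γ ∈ Γ and every x ∈ ℂ^k one has e_γ^{(H_φ,α_φ)}(x) · exp(π·H(τ, φ̄γ)) = e_{φ̄γ}^{(H,α)}(φ̄x + τ). -/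

import Mathlib

open Complex

/-- with `(H_φ, α_φ)` the pulled-back type, the multipliers satisfy
`e_γ^{(H_φ,α_φ)}(x) · exp(π·H(τ, φ̄γ)) = e_{φ̄γ}^{(H,α)}(φ̄x + τ)`, where
`e_γ^{(H,α)}(x) = α(γ)·exp(π(H(γ,x) + H(γ,γ)/2))`. -/
theorem multiplier_pullback
    (k : ℕ) (Γ : AddSubgroup (Fin k → ℂ))
    (H : (Fin k → ℂ) → (Fin k → ℂ) → ℂ)
    -- `H` is a Hermitian form
    (Hadd : ∀ w w₁ w₂, H w (w₁ + w₂) = H w w₁ + H w w₂)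
    (Hsmul : ∀ (c : ℂ) w w', H w (c • w') = c * H w w')
    (Hconj : ∀ w w', H w' w = starRingEnd ℂ (H w w'))
    -- `Im H` is integral on `Γ`
    (Hint : ∀ γ ∈ Γ, ∀ γ' ∈ Γ, ∃ n : ℤ, (H γ γ').im = (n : ℝ))
    -- `α` is a semicharacter for `H`
    (α : (Fin k → ℂ) → ℂ)
    (hα1 : ∀ γ ∈ Γ, ‖α γ‖ = 1)
    (hα2 : ∀ γ₁ ∈ Γ, ∀ γ₂ ∈ Γ, ∀ n : ℤ, (H γ₁ γ₂).im = (n : ℝ) →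
      α (γ₁ + γ₂) = α γ₁ * α γ₂ * (-1 : ℂ) ^ n)
    -- the affine map `φ = φ̄ + τ`, with `φ̄(Γ) ⊆ Γ`
    (φ : (Fin k → ℂ) →ₗ[ℂ] (Fin k → ℂ))
    (hφΓ : ∀ γ ∈ Γ, φ γ ∈ Γ)
    (τ : Fin k → ℂ) :
    ∀ γ ∈ Γ, ∀ x : Fin k → ℂ,
      -- `e_γ^{(H_φ,α_φ)}(x)`,  with  `H_φ(w,w') = H(φ̄w,φ̄w')` and
      -- `α_φ(γ) = α(φ̄γ)·exp(2πi·Im H(φ̄γ,τ))` ...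
      (α (φ γ) * Complex.exp (2 * (Real.pi : ℂ) * Complex.I * ((H (φ γ) τ).im : ℂ))) *
        Complex.exp ((Real.pi : ℂ) * (H (φ γ) (φ x) + H (φ γ) (φ γ) / 2)) *
      -- ... times `exp(π·H(τ, φ̄γ))` ...
        Complex.exp ((Real.pi : ℂ) * H τ (φ γ)) =
      -- ... equals `e_{φ̄γ}^{(H,α)}(φ̄x + τ)`
      α (φ γ) * Complex.exp ((Real.pi : ℂ) *
        (H (φ γ) (φ x + τ) + H (φ γ) (φ γ) / 2)) := by
  intro γ hγ x
  rw [Hadd (φ γ) (φ x) τ, Hconj (φ γ) τ]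
  set a := H (φ γ) τ with ha
  have hconj : starRingEnd ℂ a = a - 2 * a.im * Complex.I := by
    linear_combination (norm := (push_cast; ring_nf)) -Complex.sub_conj a
  rw [hconj, mul_assoc, mul_assoc, ← Complex.exp_add, ← Complex.exp_add]
  ring_nf
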